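/- For any quantum channel T on L(ℂ^d), the diamond norm satisfies ‖Θ ∘ (id − T)‖⋄ ≤ (d/√2)·‖id − T‖⋄, where Θ is the transposition map. Equivalently, since ‖Θ‖⋄ = d, ‖Θ∘(id−T)‖⋄ ≤ (1/√2)‖Θ‖⋄‖id−T‖⋄. -/

import Mathlib

open Matrix Kronecker BigOperators
open scoped ComplexOrder

noncomputable def traceNorm {n : Type*} [Fintype n] [DecidableEq n] (X : Matrix n n ℂ) : ℝ :=
  ((let hA := Matrix.posSemidef_conjTranspose_mul_self X
    (hA.1.eigenvectorUnitary : Matrix n n ℂ) * diagonal (fun i => ((Real.sqrt (hA.1.eigenvalues i) : ℝ) : ℂ)) *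
      (star hA.1.eigenvectorUnitary : Matrix n n ℂ)).trace).re

noncomputable def hsNorm {n : Type*} [Fintype n] (X : Matrix n n ℂ) : ℝ :=
  Real.sqrt ((Xᴴ * X).trace.re)

noncomputable def singularValues {n : Type*} [Fintype n] [DecidableEq n] (Y : Matrix n n ℂ) :
    n → ℝ :=
  fun i => Real.sqrt ((Matrix.posSemidef_conjTranspose_mul_self Y).1.eigenvalues i)

/-- Partial transpose on the first tensor factor. -/
def ptransp {d k : ℕ} (X : Matrix (Fin d × Fin k) (Fin d × Fin k) ℂ) :
    Matrix (Fin d × Fin k) (Fin d × Fin k) ℂ :=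
  fun p q => X (q.1, p.2) (p.1, q.2)

/-- Partial trace over the first tensor factor. -/
noncomputable def ptraceH {d k : ℕ} (X : Matrix (Fin d × Fin k) (Fin d × Fin k) ℂ) :
    Matrix (Fin k) (Fin k) ℂ :=
  fun j j' => ∑ i, X (i, j) (i, j')

def vec {d : ℕ} (A : Matrix (Fin d) (Fin d) ℂ) : Fin d × Fin d → ℂ := fun p => A p.1 p.2

/-- Outer product |v⟩⟨w|. -/
def outer {n : Type*} (v w : n → ℂ) : Matrix n n ℂ := fun i j => v i * star (w j)

/-- The swap operator F(e_i ⊗ e_j) = e_j ⊗ e_i. -/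
def swapOp (d : ℕ) : Matrix (Fin d × Fin d) (Fin d × Fin d) ℂ :=
  fun p q => if p.1 = q.2 ∧ p.2 = q.1 then 1 else 0

/-- Blockwise action of Φ ⊗ id on operators on H ⊗ K. -/
def tensorExt {d k : ℕ} (Φ : Matrix (Fin d) (Fin d) ℂ → Matrix (Fin d) (Fin d) ℂ)
    (Z : Matrix (Fin d × Fin k) (Fin d × Fin k) ℂ) :
    Matrix (Fin d × Fin k) (Fin d × Fin k) ℂ :=
  fun p q => Φ (fun a b => Z (a, p.2) (b, q.2)) p.1 q.1

/-- Diamond norm (stabilized at ancilla dimension d). -/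
noncomputable def diamondNorm {d : ℕ}
    (Φ : Matrix (Fin d) (Fin d) ℂ → Matrix (Fin d) (Fin d) ℂ) : ℝ :=
  ⨆ ρ : {ρ : Matrix (Fin d × Fin d) (Fin d × Fin d) ℂ // ρ.PosSemidef ∧ ρ.trace = 1},
    traceNorm (tensorExt Φ ρ.1)

/-! ### Scalar auxiliary lemmas -/

section Scalar

private lemma mymax_sub (a : ℝ) : max a 0 - max (-a) 0 = a := by
  rcases le_total a 0 with h | h
  · rw [max_eq_right h, max_eq_left (by linarith)]; ring
  · rw [max_eq_left h, max_eq_right (by linarith)]; ring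

private lemma mymax_add (a : ℝ) : max a 0 + max (-a) 0 = |a| := by
  rcases le_total a 0 with h | h
  · rw [max_eq_right h, max_eq_left (by linarith), abs_of_nonpos h]; ring
  · rw [max_eq_left h, max_eq_right (by linarith), abs_of_nonneg h]; ring

private lemma mymax_sq (a : ℝ) : (max a 0) ^ 2 + (max (-a) 0) ^ 2 = a ^ 2 := by
  rcases le_total a 0 with h | h
  · rw [max_eq_right h, max_eq_left (by linarith)]; ring
  · rw [max_eq_left h, max_eq_right (by linarith)]; ring

variable {n : Type*} [Fintype n]

lemma sum_sq_le_half (f : n → ℝ) (h0 : ∑ i, f i = 0) :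
    ∑ i, f i ^ 2 ≤ (∑ i, |f i|) ^ 2 / 2 := by
  set P := ∑ i, max (f i) 0 with hP
  set M := ∑ i, max (-f i) 0 with hM
  have hPM : P = M := by
    have h : P - M = ∑ i, f i := by
      rw [hP, hM, ← Finset.sum_sub_distrib]
      exact Finset.sum_congr rfl fun i _ => mymax_sub (f i)
    have := h.trans h0
    linarith
  have habs : ∑ i, |f i| = P + M := by
    rw [hP, hM, ← Finset.sum_add_distrib]
    exact Finset.sum_congr rfl fun i _ => (mymax_add (f i)).symm
  have hsq : ∑ i, f i ^ 2 = ∑ i, (max (f i) 0) ^ 2 + ∑ i, (max (-f i) 0) ^ 2 := by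
    rw [← Finset.sum_add_distrib]
    exact (Finset.sum_congr rfl fun i _ => (mymax_sq (f i))).symm
  have h1 : ∑ i, (max (f i) 0) ^ 2 ≤ P ^ 2 :=
    Finset.sum_sq_le_sq_sum_of_nonneg fun i _ => le_max_right _ _
  have h2 : ∑ i, (max (-f i) 0) ^ 2 ≤ M ^ 2 :=
    Finset.sum_sq_le_sq_sum_of_nonneg fun i _ => le_max_right _ _
  rw [hsq, habs]
  nlinarith [h1, h2, hPM]

end Scalar

/-! ### Spectral lemmas for the trace norm and Hilbert-Schmidt norm -/

section Aux
variable {n : Type*} [Fintype n] [DecidableEq n]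

lemma trace_unitary_conj (U : Matrix.unitaryGroup n ℂ) (D : Matrix n n ℂ) :
    ((U : Matrix n n ℂ) * D * (star U : Matrix n n ℂ)).trace = D.trace := by
  rw [Matrix.trace_mul_cycle, (Matrix.mem_unitaryGroup_iff').mp U.2, Matrix.one_mul]

noncomputable def psdSqrt {A : Matrix n n ℂ} (hA : A.PosSemidef) : Matrix n n ℂ :=
  (hA.1.eigenvectorUnitary : Matrix n n ℂ) *
    diagonal (fun i => ((Real.sqrt (hA.1.eigenvalues i) : ℝ) : ℂ)) *
      (star hA.1.eigenvectorUnitary : Matrix n n ℂ)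

lemma traceNorm_def' (X : Matrix n n ℂ) :
    traceNorm X = (psdSqrt (Matrix.posSemidef_conjTranspose_mul_self X)).trace.re := rfl

lemma spec' {X : Matrix n n ℂ} (hX : X.IsHermitian) :
    X = (hX.eigenvectorUnitary : Matrix n n ℂ) * Matrix.diagonal (RCLike.ofReal ∘ hX.eigenvalues) *
      (star hX.eigenvectorUnitary : Matrix n n ℂ) := by
  conv_lhs => rw [hX.spectral_theorem]
  rw [Unitary.conjStarAlgAut_apply]

lemma psd_eq_sqrt {A B : Matrix n n ℂ} (hB : B.PosSemidef) (hA : A.PosSemidef) (h : B ^ 2 = A) :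
    B = psdSqrt hA := by
  have h1 : psdSqrt hA = cfc Real.sqrt A := by
    rw [Matrix.IsHermitian.cfc_eq hA.1, Matrix.IsHermitian.cfc, Unitary.conjStarAlgAut_apply]
    rfl
  rw [h1, ← h]
  refine Eq.trans ?_ (cfc_comp_pow Real.sqrt 2 B (ha := hB.1))
  conv_lhs => rw [← cfc_id' ℝ B (ha := hB.1)]
  refine cfc_congr fun x hx => ?_
  rw [hB.1.spectrum_real_eq_range_eigenvalues] at hx
  obtain ⟨i, rfl⟩ := hx
  exact (Real.sqrt_sq (hB.eigenvalues_nonneg i)).symm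

lemma sqrt_trace_eq {A : Matrix n n ℂ} (hA : A.PosSemidef) :
    (psdSqrt hA).trace = ∑ i, ((Real.sqrt (hA.1.eigenvalues i) : ℝ) : ℂ) := by
  rw [psdSqrt, trace_unitary_conj]
  simp [Matrix.trace_diagonal]

lemma traceNorm_eq_sum (Y : Matrix n n ℂ) :
    traceNorm Y =
      ∑ i, Real.sqrt ((Matrix.posSemidef_conjTranspose_mul_self Y).1.eigenvalues i) := by
  rw [traceNorm_def', sqrt_trace_eq]
  simp [Complex.re_sum]

lemma traceNorm_nonneg (Y : Matrix n n ℂ) : 0 ≤ traceNorm Y := by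
  rw [traceNorm_eq_sum]
  exact Finset.sum_nonneg fun i _ => Real.sqrt_nonneg _

lemma hs_sq_eq_sum (Y : Matrix n n ℂ) :
    (Yᴴ * Y).trace.re =
      ∑ i, (Matrix.posSemidef_conjTranspose_mul_self Y).1.eigenvalues i := by
  have h := (Matrix.posSemidef_conjTranspose_mul_self Y).1
  have : (Yᴴ * Y).trace = ∑ i, (h.eigenvalues i : ℂ) := by
    conv_lhs => rw [spec' h]
    rw [trace_unitary_conj]
    simp [Matrix.trace_diagonal]
  rw [this]
  simp [Complex.re_sum]

lemma hs_sq_nonneg (Y : Matrix n n ℂ) : 0 ≤ (Yᴴ * Y).trace.re := by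
  rw [hs_sq_eq_sum]
  exact Finset.sum_nonneg fun i _ =>
    (Matrix.posSemidef_conjTranspose_mul_self Y).eigenvalues_nonneg i

lemma traceNorm_le_card_hsNorm (Y : Matrix n n ℂ) :
    traceNorm Y ≤ Real.sqrt (Fintype.card n) * hsNorm Y := by
  rw [traceNorm_eq_sum, hsNorm, ← Real.sqrt_mul (by positivity)]
  rw [Real.le_sqrt (Finset.sum_nonneg fun i _ => Real.sqrt_nonneg _)]
  calc (∑ i, Real.sqrt ((Matrix.posSemidef_conjTranspose_mul_self Y).1.eigenvalues i)) ^ 2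
      ≤ (Finset.univ.card : ℝ) *
        ∑ i, (Real.sqrt ((Matrix.posSemidef_conjTranspose_mul_self Y).1.eigenvalues i)) ^ 2 :=
        sq_sum_le_card_mul_sum_sq
    _ = (Fintype.card n : ℝ) * ((Yᴴ * Y).trace.re) := by
        rw [hs_sq_eq_sum, Finset.card_univ]
        congr 1
        exact Finset.sum_congr rfl fun i _ => Real.sq_sqrt
          ((Matrix.posSemidef_conjTranspose_mul_self Y).eigenvalues_nonneg i)
  exact mul_nonneg (Nat.cast_nonneg _) (hs_sq_nonneg Y)

variable {X : Matrix n n ℂ}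

lemma conj_collapse (hX : X.IsHermitian) (D D' : Matrix n n ℂ) :
    ((hX.eigenvectorUnitary : Matrix n n ℂ) * D * (star hX.eigenvectorUnitary : Matrix n n ℂ)) *
    ((hX.eigenvectorUnitary : Matrix n n ℂ) * D' * (star hX.eigenvectorUnitary : Matrix n n ℂ)) =
    (hX.eigenvectorUnitary : Matrix n n ℂ) * (D * D') *
      (star hX.eigenvectorUnitary : Matrix n n ℂ) := by
  have hU : (star hX.eigenvectorUnitary : Matrix n n ℂ) *
      (hX.eigenvectorUnitary : Matrix n n ℂ) = 1 :=
    (Matrix.mem_unitaryGroup_iff').mp hX.eigenvectorUnitary.2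
  simp only [Matrix.mul_assoc]
  congr 1
  rw [← Matrix.mul_assoc (star hX.eigenvectorUnitary : Matrix n n ℂ), hU, Matrix.one_mul,
    ← Matrix.mul_assoc]

lemma herm_sq_spectral (hX : X.IsHermitian) :
    Xᴴ * X = (hX.eigenvectorUnitary : Matrix n n ℂ) *
      Matrix.diagonal (fun i => ((hX.eigenvalues i : ℂ) * (hX.eigenvalues i : ℂ))) *
      (star hX.eigenvectorUnitary : Matrix n n ℂ) := by
  calc Xᴴ * X = X * X := by rw [hX.eq]
    _ = ((hX.eigenvectorUnitary : Matrix n n ℂ) *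
          Matrix.diagonal (RCLike.ofReal ∘ hX.eigenvalues) *
          (star hX.eigenvectorUnitary : Matrix n n ℂ)) *
        ((hX.eigenvectorUnitary : Matrix n n ℂ) *
          Matrix.diagonal (RCLike.ofReal ∘ hX.eigenvalues) *
          (star hX.eigenvectorUnitary : Matrix n n ℂ)) := by rw [← spec' hX]
    _ = _ := by rw [conj_collapse hX, Matrix.diagonal_mul_diagonal]; rfl

lemma herm_abs_spectral (hX : X.IsHermitian) :
    ((hX.eigenvectorUnitary : Matrix n n ℂ) *
      Matrix.diagonal (fun i => ((|hX.eigenvalues i| : ℝ) : ℂ)) *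
      (star hX.eigenvectorUnitary : Matrix n n ℂ)) ^ 2 = Xᴴ * X := by
  rw [pow_two, conj_collapse hX, Matrix.diagonal_mul_diagonal, herm_sq_spectral hX]
  have he : (fun i : n => ((|hX.eigenvalues i| : ℝ) : ℂ) * ((|hX.eigenvalues i| : ℝ) : ℂ)) =
      fun i : n => ((hX.eigenvalues i : ℂ) * (hX.eigenvalues i : ℂ)) := by
    funext i
    rw [← Complex.ofReal_mul, ← Complex.ofReal_mul, ← sq, ← sq, sq_abs]
  rw [he]

lemma herm_abs_posSemidef (hX : X.IsHermitian) :
    ((hX.eigenvectorUnitary : Matrix n n ℂ) *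
      Matrix.diagonal (fun i => ((|hX.eigenvalues i| : ℝ) : ℂ)) *
      (star hX.eigenvectorUnitary : Matrix n n ℂ)).PosSemidef := by
  rw [show (star hX.eigenvectorUnitary : Matrix n n ℂ) =
    (hX.eigenvectorUnitary : Matrix n n ℂ)ᴴ from rfl]
  refine Matrix.PosSemidef.mul_mul_conjTranspose_same ?_ _
  refine Matrix.posSemidef_diagonal_iff.mpr fun i => ?_
  rw [Complex.zero_le_real]
  exact abs_nonneg _

lemma traceNorm_herm (hX : X.IsHermitian) :
    traceNorm X = ∑ i, |hX.eigenvalues i| := by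
  have h := Matrix.posSemidef_conjTranspose_mul_self X
  have := psd_eq_sqrt (herm_abs_posSemidef hX) h (herm_abs_spectral hX)
  rw [traceNorm_def']
  rw [← this, trace_unitary_conj hX.eigenvectorUnitary]
  simp [Matrix.trace_diagonal, Complex.re_sum]

lemma herm_hs_sq (hX : X.IsHermitian) :
    (Xᴴ * X).trace.re = ∑ i, (hX.eigenvalues i) ^ 2 := by
  rw [herm_sq_spectral hX, trace_unitary_conj hX.eigenvectorUnitary]
  simp [Matrix.trace_diagonal, Complex.re_sum, ← Complex.ofReal_mul, sq]

lemma herm_trace_re (hX : X.IsHermitian) :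
    X.trace.re = ∑ i, hX.eigenvalues i := by
  have : X.trace = ∑ i, (hX.eigenvalues i : ℂ) := by
    conv_lhs => rw [spec' hX]
    rw [trace_unitary_conj hX.eigenvectorUnitary]
    simp [Matrix.trace_diagonal]
  rw [this]
  simp [Complex.re_sum]

/-- Key inequality: a Hermitian matrix with trace zero satisfies `‖X‖₂ ≤ ‖X‖₁ / √2`. -/
lemma herm_trace0_hs_le (hX : X.IsHermitian) (h0 : X.trace = 0) :
    hsNorm X ≤ (Real.sqrt 2)⁻¹ * traceNorm X := by
  have hsum : ∑ i, hX.eigenvalues i = 0 := by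
    have := herm_trace_re hX
    rw [h0] at this
    simpa using this.symm
  have key := sum_sq_le_half hX.eigenvalues hsum
  have hS : (0:ℝ) ≤ ∑ i, |hX.eigenvalues i| :=
    Finset.sum_nonneg fun i _ => abs_nonneg _
  rw [hsNorm, herm_hs_sq hX, traceNorm_herm hX]
  calc Real.sqrt (∑ i, hX.eigenvalues i ^ 2)
      ≤ Real.sqrt ((∑ i, |hX.eigenvalues i|) ^ 2 / 2) := Real.sqrt_le_sqrt key
    _ = (Real.sqrt 2)⁻¹ * ∑ i, |hX.eigenvalues i| := by
        rw [Real.sqrt_div (by positivity), Real.sqrt_sq hS, div_eq_inv_mul]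

lemma traceNorm_psd {P : Matrix n n ℂ} (hP : P.PosSemidef) :
    traceNorm P = P.trace.re := by
  have h := Matrix.posSemidef_conjTranspose_mul_self P
  have hsq : P ^ 2 = Pᴴ * P := by rw [pow_two, hP.1.eq]
  have := psd_eq_sqrt hP h hsq
  rw [traceNorm_def']
  rw [← this]

lemma psd_hs_le_trace {P : Matrix n n ℂ} (hP : P.PosSemidef) :
    hsNorm P ≤ P.trace.re := by
  rw [hsNorm, herm_hs_sq hP.1, herm_trace_re hP.1]
  calc Real.sqrt (∑ i, hP.1.eigenvalues i ^ 2)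
      ≤ Real.sqrt ((∑ i, hP.1.eigenvalues i) ^ 2) := by
        apply Real.sqrt_le_sqrt
        exact Finset.sum_sq_le_sq_sum_of_nonneg fun i _ => hP.eigenvalues_nonneg i
    _ = ∑ i, hP.1.eigenvalues i := Real.sqrt_sq
        (Finset.sum_nonneg fun i _ => hP.eigenvalues_nonneg i)

end Aux

section HS
variable {n : Type*} [Fintype n]

lemma hs_sq_entry (Y : Matrix n n ℂ) :
    (Yᴴ * Y).trace.re = ∑ p : n × n, Complex.normSq (Y p.1 p.2) := by
  have h1 : (Yᴴ * Y).trace = ∑ j, ∑ i, ((Complex.normSq (Y i j) : ℝ) : ℂ) := by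
    rw [Matrix.trace]
    refine Finset.sum_congr rfl fun j _ => ?_
    rw [Matrix.diag_apply, Matrix.mul_apply]
    refine Finset.sum_congr rfl fun i _ => ?_
    rw [Matrix.conjTranspose_apply, mul_comm, Complex.star_def, Complex.mul_conj]
  rw [h1, Fintype.sum_prod_type]
  simp only [Complex.re_sum, Complex.ofReal_re]
  exact Finset.sum_comm

lemma hsNorm_eq_euclid (Y : Matrix n n ℂ) :
    hsNorm Y = ‖(WithLp.equiv 2 ((n × n) → ℂ)).symm (fun p => Y p.1 p.2)‖ := by
  rw [hsNorm, hs_sq_entry, EuclideanSpace.norm_eq]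
  congr 1
  refine Finset.sum_congr rfl fun p _ => ?_
  rw [show ((WithLp.equiv 2 ((n × n) → ℂ)).symm fun p => Y p.1 p.2).ofLp p = Y p.1 p.2 from rfl,
    ← Complex.sq_norm]

lemma hsNorm_sub_le (A B : Matrix n n ℂ) : hsNorm (A - B) ≤ hsNorm A + hsNorm B := by
  rw [hsNorm_eq_euclid, hsNorm_eq_euclid, hsNorm_eq_euclid]
  have h : (WithLp.equiv 2 ((n × n) → ℂ)).symm (fun p => (A - B) p.1 p.2) =
      (WithLp.equiv 2 ((n × n) → ℂ)).symm (fun p => A p.1 p.2) -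
      (WithLp.equiv 2 ((n × n) → ℂ)).symm (fun p => B p.1 p.2) := rfl
  rw [h]
  exact norm_sub_le _ _

end HS

lemma hsNorm_ptransp {d k : ℕ} (X : Matrix (Fin d × Fin k) (Fin d × Fin k) ℂ) :
    hsNorm (ptransp X) = hsNorm X := by
  rw [hsNorm, hsNorm, hs_sq_entry, hs_sq_entry]
  congr 1
  exact Fintype.sum_bijective
    (fun r : (Fin d × Fin k) × (Fin d × Fin k) => ((r.2.1, r.1.2), (r.1.1, r.2.2)))
    (Function.Involutive.bijective fun r => rfl) _ _ (fun r => rfl)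

lemma posSemidef_add {n : Type*} [Fintype n] {A B : Matrix n n ℂ}
    (hA : A.PosSemidef) (hB : B.PosSemidef) : (A + B).PosSemidef :=
  hA.add hB

lemma posSemidef_sum {n ι : Type*} [Fintype n] (s : Finset ι) (f : ι → Matrix n n ℂ)
    (h : ∀ i ∈ s, (f i).PosSemidef) : (∑ i ∈ s, f i).PosSemidef :=
  Finset.sum_induction f Matrix.PosSemidef (fun _ _ ha hb => posSemidef_add ha hb)
    Matrix.PosSemidef.zero h

section Kraus
variable {d m : ℕ} (E : Fin m → Matrix (Fin d) (Fin d) ℂ)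

/-- Kraus operator extended to the doubled space: `E i ⊗ 1`. -/
def myK (i : Fin m) : Matrix (Fin d × Fin d) (Fin d × Fin d) ℂ :=
  fun p q => E i p.1 q.1 * (if p.2 = q.2 then 1 else 0)

lemma kraus_entry (ρ : Matrix (Fin d × Fin d) (Fin d × Fin d) ℂ) (i : Fin m)
    (p q : Fin d × Fin d) :
    (myK E i * ρ * (myK E i)ᴴ) p q =
      (E i * (Matrix.of fun a b => ρ (a, p.2) (b, q.2)) * (E i)ᴴ) p.1 q.1 := by
  simp only [Matrix.mul_apply, Matrix.conjTranspose_apply, myK, Fintype.sum_prod_type,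
    star_mul', mul_ite, ite_mul, mul_one, one_mul, mul_zero, zero_mul, apply_ite star, star_one,
    star_zero, Matrix.of_apply, Finset.sum_ite_eq, Finset.sum_ite_eq', Finset.mem_univ, if_true,
    Finset.sum_mul, Finset.mul_sum]

lemma tensorExt_kraus (T : Matrix (Fin d) (Fin d) ℂ → Matrix (Fin d) (Fin d) ℂ)
    (hT : ∀ X, T X = ∑ i, E i * X * (E i)ᴴ)
    (ρ : Matrix (Fin d × Fin d) (Fin d × Fin d) ℂ) :
    tensorExt T ρ = ∑ i, myK E i * ρ * (myK E i)ᴴ := by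
  funext p q
  have h : (∑ i, myK E i * ρ * (myK E i)ᴴ) p q = ∑ i, (myK E i * ρ * (myK E i)ᴴ) p q := by
    simp [Matrix.sum_apply]
  rw [h]
  show T (Matrix.of fun a b => ρ (a, p.2) (b, q.2)) p.1 q.1 = _
  rw [hT]
  have h2 : (∑ i, E i * (Matrix.of fun a b => ρ (a, p.2) (b, q.2)) * (E i)ᴴ) p.1 q.1
      = ∑ i, (E i * (Matrix.of fun a b => ρ (a, p.2) (b, q.2)) * (E i)ᴴ) p.1 q.1 := by
    simp [Matrix.sum_apply]
  show (∑ i, E i * (Matrix.of fun a b => ρ (a, p.2) (b, q.2)) * (E i)ᴴ) p.1 q.1 = _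
  rw [h2]
  exact Finset.sum_congr rfl fun i _ => (kraus_entry E ρ i p q).symm

lemma tensorExt_kraus_posSemidef (T : Matrix (Fin d) (Fin d) ℂ → Matrix (Fin d) (Fin d) ℂ)
    (hT : ∀ X, T X = ∑ i, E i * X * (E i)ᴴ)
    {ρ : Matrix (Fin d × Fin d) (Fin d × Fin d) ℂ} (hρ : ρ.PosSemidef) :
    (tensorExt T ρ).PosSemidef := by
  rw [tensorExt_kraus E T hT ρ]
  exact posSemidef_sum _ _ fun i _ => hρ.mul_mul_conjTranspose_same (myK E i)

lemma sum_conj_myK (hE : ∑ i, (E i)ᴴ * E i = 1) :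
    ∑ i, (myK E i)ᴴ * myK E i = 1 := by
  funext p q
  have h : (∑ i, (myK E i)ᴴ * myK E i) p q = ∑ i, ((myK E i)ᴴ * myK E i) p q := by
    simp [Matrix.sum_apply]
  rw [h]
  have h1 : ∀ i : Fin m, ((myK E i)ᴴ * myK E i) p q =
      ((E i)ᴴ * E i) p.1 q.1 * (if p.2 = q.2 then 1 else 0) := by
    intro i
    simp only [Matrix.mul_apply, Matrix.conjTranspose_apply, myK, Fintype.sum_prod_type,
      star_mul', mul_ite, ite_mul, mul_one, one_mul, mul_zero, zero_mul, apply_ite star,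
      star_one, star_zero, Finset.sum_ite_eq, Finset.sum_ite_eq', Finset.mem_univ, if_true,
      Finset.sum_mul, Finset.mul_sum]
    by_cases hc : p.2 = q.2 <;> simp [hc, eq_comm]
  simp only [h1, ← Finset.sum_mul]
  have h2 : (∑ i, (E i)ᴴ * E i) p.1 q.1 = (1 : Matrix (Fin d) (Fin d) ℂ) p.1 q.1 := by rw [hE]
  have h3 : (∑ i, (E i)ᴴ * E i) p.1 q.1 = ∑ i, ((E i)ᴴ * E i) p.1 q.1 := by
    simp [Matrix.sum_apply]
  rw [← h3, h2, Matrix.one_apply, Matrix.one_apply]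
  by_cases hpq1 : p.1 = q.1 <;> by_cases hpq2 : p.2 = q.2 <;>
    simp [hpq1, hpq2, Prod.ext_iff]

lemma tensorExt_kraus_trace (T : Matrix (Fin d) (Fin d) ℂ → Matrix (Fin d) (Fin d) ℂ)
    (hT : ∀ X, T X = ∑ i, E i * X * (E i)ᴴ) (hE : ∑ i, (E i)ᴴ * E i = 1)
    (ρ : Matrix (Fin d × Fin d) (Fin d × Fin d) ℂ) :
    (tensorExt T ρ).trace = ρ.trace := by
  rw [tensorExt_kraus E T hT ρ, Matrix.trace_sum]
  have h : ∀ i : Fin m, (myK E i * ρ * (myK E i)ᴴ).trace = ((myK E i)ᴴ * myK E i * ρ).trace :=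
    fun i => Matrix.trace_mul_cycle (myK E i) ρ (myK E i)ᴴ
  simp only [h, ← Matrix.trace_sum, ← Finset.sum_mul, sum_conj_myK E hE, Matrix.one_mul]

end Kraus

section MaxEnt
variable {n : Type*} [Fintype n] [DecidableEq n]

lemma posSemidef_real_smul_one {r : ℝ} (hr : 0 ≤ r) :
    (((r : ℂ) • (1 : Matrix n n ℂ))).PosSemidef := by
  refine Matrix.PosSemidef.of_dotProduct_mulVec_nonneg ?_ ?_
  · show ((r : ℂ) • (1 : Matrix n n ℂ))ᴴ = (r : ℂ) • (1 : Matrix n n ℂ)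
    rw [Matrix.conjTranspose_smul, Matrix.conjTranspose_one, Complex.star_def,
      Complex.conj_ofReal]
  · intro x
    rw [Matrix.smul_mulVec, Matrix.one_mulVec, dotProduct_smul, smul_eq_mul]
    exact mul_nonneg (by rw [Complex.zero_le_real]; exact hr) (dotProduct_star_self_nonneg x)

variable {d : ℕ}

/-- The maximally entangled state (as a density matrix). -/
noncomputable def rho0 (d : ℕ) : Matrix (Fin d × Fin d) (Fin d × Fin d) ℂ :=
  fun p q => if p.1 = p.2 ∧ q.1 = q.2 then (((d : ℝ)⁻¹ : ℝ) : ℂ) else 0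

lemma rho0_posSemidef : (rho0 d).PosSemidef := by
  refine Matrix.PosSemidef.of_dotProduct_mulVec_nonneg ?_ ?_
  · funext p q
    simp only [Matrix.conjTranspose_apply, rho0]
    by_cases h : q.1 = q.2 ∧ p.1 = p.2
    · simp [h.1, h.2, Complex.star_def, Complex.conj_ofReal]
    · rw [if_neg h, if_neg (fun hc => h ⟨hc.2, hc.1⟩), star_zero]
  · intro x
    set s : ℂ := ∑ q : Fin d × Fin d, if q.1 = q.2 then x q else 0 with hs
    have hmv : rho0 d *ᵥ x = fun p => if p.1 = p.2 then (((d : ℝ)⁻¹ : ℝ) : ℂ) * s else 0 := by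
      funext p
      show (∑ q, rho0 d p q * x q) = _
      by_cases hp : p.1 = p.2
      · simp only [rho0, hp, true_and, if_true, hs, Finset.mul_sum]
        exact Finset.sum_congr rfl fun q _ => by by_cases hq : q.1 = q.2 <;> simp [hq]
      · simp only [rho0, hp, false_and, if_false, zero_mul, Finset.sum_const_zero]
    rw [hmv]
    have hdp : (dotProduct (star x) fun p =>
        if p.1 = p.2 then (((d : ℝ)⁻¹ : ℝ) : ℂ) * s else 0) =
        (((d : ℝ)⁻¹ : ℝ) : ℂ) * (star s * s) := by
      rw [dotProduct]
      have : ∀ p : Fin d × Fin d, star x p * (if p.1 = p.2 then (((d : ℝ)⁻¹ : ℝ) : ℂ) * s else 0)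
          = (((d : ℝ)⁻¹ : ℝ) : ℂ) * ((if p.1 = p.2 then star (x p) else 0) * s) := by
        intro p; by_cases hp : p.1 = p.2 <;> simp [hp] <;> ring
      rw [Finset.sum_congr rfl fun p _ => this p, ← Finset.mul_sum, ← Finset.sum_mul]
      have h2 : star s = ∑ p : Fin d × Fin d, (if p.1 = p.2 then star (x p) else 0) := by
        rw [hs, star_sum]
        exact Finset.sum_congr rfl fun p _ => by by_cases hp : p.1 = p.2 <;> simp [hp]
      rw [h2]
    rw [hdp]
    have : star s * s = ((Complex.normSq s : ℝ) : ℂ) := by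
      rw [Complex.star_def, mul_comm, Complex.mul_conj]
    rw [this, ← Complex.ofReal_mul, Complex.zero_le_real]
    exact mul_nonneg (by positivity) (Complex.normSq_nonneg s)

lemma rho0_trace (hd : d ≠ 0) : (rho0 d).trace = 1 := by
  rw [Matrix.trace]
  have : ∀ p : Fin d × Fin d, (rho0 d).diag p = if p.1 = p.2 then (((d : ℝ)⁻¹ : ℝ) : ℂ) else 0 := by
    intro p; simp [rho0, Matrix.diag]
  rw [Finset.sum_congr rfl fun p _ => this p]
  rw [Fintype.sum_prod_type]
  simp [Finset.sum_ite_eq]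
  rw [mul_inv_cancel₀]
  exact_mod_cast Nat.cast_ne_zero.mpr hd

end MaxEnt

lemma ptransp_rho0_conj (hd : d ≠ 0) :
    (ptransp (rho0 d))ᴴ * ptransp (rho0 d) = (((d : ℝ)⁻¹ : ℝ) : ℂ) • ((((d : ℝ)⁻¹ : ℝ) : ℂ) •
      (1 : Matrix (Fin d × Fin d) (Fin d × Fin d) ℂ)) := by
  funext p q
  rw [Matrix.mul_apply]
  rw [Fintype.sum_eq_single ((p.2, p.1) : Fin d × Fin d) ?side]
  case side =>
    intro r hr
    simp only [Matrix.conjTranspose_apply, ptransp, rho0]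
    by_cases h1 : p.1 = r.2
    · by_cases h2 : r.1 = p.2
      · exact absurd (Prod.ext h2 h1.symm) hr
      · rw [if_neg (fun hc => h2 hc.2), star_zero, zero_mul]
    · rw [if_neg (fun hc => h1 hc.1), star_zero, zero_mul]
  · simp only [Matrix.conjTranspose_apply, ptransp, rho0, Matrix.smul_apply, Matrix.one_apply,
      smul_eq_mul]
    by_cases h1 : p.1 = q.1 <;> by_cases h2 : p.2 = q.2 <;>
      simp [h1, h2, Prod.ext_iff, Complex.star_def, Complex.conj_ofReal, eq_comm]

lemma traceNorm_ptransp_rho0 (hd : d ≠ 0) :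
    traceNorm (ptransp (rho0 d)) = d := by
  have hA : ((((d : ℝ)⁻¹ : ℝ) : ℂ) • (1 : Matrix (Fin d × Fin d) (Fin d × Fin d) ℂ)).PosSemidef :=
    posSemidef_real_smul_one (by positivity)
  have hsq : (((((d : ℝ)⁻¹ : ℝ) : ℂ) • (1 : Matrix (Fin d × Fin d) (Fin d × Fin d) ℂ))) ^ 2 =
      (ptransp (rho0 d))ᴴ * ptransp (rho0 d) := by
    rw [ptransp_rho0_conj hd, pow_two, Matrix.smul_mul, Matrix.mul_smul, Matrix.one_mul]
  have h := Matrix.posSemidef_conjTranspose_mul_self (ptransp (rho0 d))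
  have heq := psd_eq_sqrt hA h hsq
  rw [traceNorm_def']
  rw [← heq, Matrix.trace_smul, Matrix.trace_one, smul_eq_mul]
  have hcard : (Fintype.card (Fin d × Fin d) : ℂ) = ((d * d : ℝ) : ℂ) := by
    rw [Fintype.card_prod, Fintype.card_fin]
    push_cast
    ring
  rw [hcard, ← Complex.ofReal_mul, Complex.ofReal_re]
  field_simp


theorem diamond_norm_submultiplicativity {d m : ℕ}
    (E : Fin m → Matrix (Fin d) (Fin d) ℂ) (hE : ∑ i, (E i)ᴴ * E i = 1)
    (T : Matrix (Fin d) (Fin d) ℂ → Matrix (Fin d) (Fin d) ℂ)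
    (hT : ∀ X, T X = ∑ i, E i * X * (E i)ᴴ) :
    diamondNorm (fun X => (X - T X)ᵀ) ≤
      (d / Real.sqrt 2) * diamondNorm (fun X => X - T X) ∧
    diamondNorm (fun X => (X - T X)ᵀ) ≤
      (1 / Real.sqrt 2) * diamondNorm (fun X : Matrix (Fin d) (Fin d) ℂ => Xᵀ) *
        diamondNorm (fun X => X - T X) := by
  by_cases hd : d = 0
  · subst hd
    haveI hempty : IsEmpty {ρ : Matrix (Fin 0 × Fin 0) (Fin 0 × Fin 0) ℂ //
        ρ.PosSemidef ∧ ρ.trace = 1} := by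
      constructor
      rintro ⟨ρ, -, htr⟩
      have h0 : ρ.trace = 0 := by simp [Matrix.trace]
      rw [h0] at htr
      exact one_ne_zero htr.symm
    have hzero : ∀ Φ : Matrix (Fin 0) (Fin 0) ℂ → Matrix (Fin 0) (Fin 0) ℂ,
        diamondNorm Φ = 0 := fun Φ => Real.iSup_of_isEmpty _
    constructor <;> simp [hzero]
  -- main case : d ≠ 0
  haveI hne : Nonempty {ρ : Matrix (Fin d × Fin d) (Fin d × Fin d) ℂ //
      ρ.PosSemidef ∧ ρ.trace = 1} := ⟨⟨rho0 d, rho0_posSemidef, rho0_trace hd⟩⟩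
  have hcard : Real.sqrt (Fintype.card (Fin d × Fin d)) = (d : ℝ) := by
    rw [Fintype.card_prod, Fintype.card_fin]
    have h : ((d * d : ℕ) : ℝ) = (d : ℝ) * (d : ℝ) := by push_cast; ring
    rw [h, Real.sqrt_mul_self (Nat.cast_nonneg d)]
  -- basic facts about an arbitrary state ρ
  have hsX : ∀ ρ : Matrix (Fin d × Fin d) (Fin d × Fin d) ℂ, ρ.PosSemidef → ρ.trace = 1 →
      (tensorExt (fun X => X - T X) ρ).IsHermitian ∧
      (tensorExt (fun X => X - T X) ρ).trace = 0 ∧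
      hsNorm (tensorExt (fun X => X - T X) ρ) ≤ 2 := by
    intro ρ hρ htr
    have hQpsd := tensorExt_kraus_posSemidef E T hT hρ
    have hQtr : (tensorExt T ρ).trace = 1 := by
      rw [tensorExt_kraus_trace E T hT hE, htr]
    have hXdecomp : tensorExt (fun X => X - T X) ρ = ρ - tensorExt T ρ := rfl
    refine ⟨?_, ?_, ?_⟩
    · rw [hXdecomp]; exact hρ.1.sub hQpsd.1
    · rw [hXdecomp, Matrix.trace_sub, hQtr, htr, sub_self]
    · rw [hXdecomp]
      calc hsNorm (ρ - tensorExt T ρ) ≤ hsNorm ρ + hsNorm (tensorExt T ρ) := hsNorm_sub_le _ _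
        _ ≤ ρ.trace.re + (tensorExt T ρ).trace.re :=
            add_le_add (psd_hs_le_trace hρ) (psd_hs_le_trace hQpsd)
        _ = 2 := by rw [htr, hQtr]; norm_num
  -- bounded above : the Δ-family
  have hBddΔ : BddAbove (Set.range fun ρ : {ρ : Matrix (Fin d × Fin d) (Fin d × Fin d) ℂ //
      ρ.PosSemidef ∧ ρ.trace = 1} => traceNorm (tensorExt (fun X => X - T X) ρ.1)) := by
    refine ⟨(d : ℝ) * 2, ?_⟩
    rintro x ⟨ρ, rfl⟩
    calc traceNorm (tensorExt (fun X => X - T X) ρ.1)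
        ≤ Real.sqrt (Fintype.card (Fin d × Fin d)) *
          hsNorm (tensorExt (fun X => X - T X) ρ.1) := traceNorm_le_card_hsNorm _
      _ ≤ (d : ℝ) * 2 := by
          rw [hcard]
          exact mul_le_mul_of_nonneg_left ((hsX ρ.1 ρ.2.1 ρ.2.2).2.2) (Nat.cast_nonneg d)
  have hΔnn : 0 ≤ diamondNorm (fun X => X - T X) :=
    Real.iSup_nonneg fun ρ => traceNorm_nonneg _
  -- per-state key estimate
  have key : ∀ ρ : {ρ : Matrix (Fin d × Fin d) (Fin d × Fin d) ℂ //
      ρ.PosSemidef ∧ ρ.trace = 1},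
      traceNorm (tensorExt (fun X => (X - T X)ᵀ) ρ.1) ≤
        ((d : ℝ) / Real.sqrt 2) * diamondNorm (fun X => X - T X) := by
    intro ρ
    obtain ⟨hXh, hX0, -⟩ := hsX ρ.1 ρ.2.1 ρ.2.2
    have hpt : tensorExt (fun X => (X - T X)ᵀ) ρ.1 =
        ptransp (tensorExt (fun X => X - T X) ρ.1) := rfl
    rw [hpt]
    calc traceNorm (ptransp (tensorExt (fun X => X - T X) ρ.1))
        ≤ Real.sqrt (Fintype.card (Fin d × Fin d)) *
          hsNorm (ptransp (tensorExt (fun X => X - T X) ρ.1)) := traceNorm_le_card_hsNorm _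
      _ = (d : ℝ) * hsNorm (tensorExt (fun X => X - T X) ρ.1) := by
          rw [hcard, hsNorm_ptransp]
      _ ≤ (d : ℝ) * ((Real.sqrt 2)⁻¹ * traceNorm (tensorExt (fun X => X - T X) ρ.1)) :=
          mul_le_mul_of_nonneg_left (herm_trace0_hs_le hXh hX0) (Nat.cast_nonneg d)
      _ = ((d : ℝ) / Real.sqrt 2) * traceNorm (tensorExt (fun X => X - T X) ρ.1) := by
          rw [div_eq_mul_inv]; ring
      _ ≤ ((d : ℝ) / Real.sqrt 2) * diamondNorm (fun X => X - T X) := by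
          refine mul_le_mul_of_nonneg_left ?_ (by positivity)
          exact le_ciSup hBddΔ ρ
  have first : diamondNorm (fun X => (X - T X)ᵀ) ≤
      ((d : ℝ) / Real.sqrt 2) * diamondNorm (fun X => X - T X) := ciSup_le key
  refine ⟨first, ?_⟩
  -- lower bound for the diamond norm of the transpose
  have hBddΘ : BddAbove (Set.range fun ρ : {ρ : Matrix (Fin d × Fin d) (Fin d × Fin d) ℂ //
      ρ.PosSemidef ∧ ρ.trace = 1} =>
        traceNorm (tensorExt (fun X : Matrix (Fin d) (Fin d) ℂ => Xᵀ) ρ.1)) := by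
    refine ⟨(d : ℝ), ?_⟩
    rintro x ⟨ρ, rfl⟩
    show traceNorm (tensorExt (fun X : Matrix (Fin d) (Fin d) ℂ => Xᵀ) ρ.1) ≤ (d : ℝ)
    have hpt : tensorExt (fun X : Matrix (Fin d) (Fin d) ℂ => Xᵀ) ρ.1 = ptransp ρ.1 := rfl
    rw [hpt]
    calc traceNorm (ptransp ρ.1)
        ≤ Real.sqrt (Fintype.card (Fin d × Fin d)) * hsNorm (ptransp ρ.1) :=
          traceNorm_le_card_hsNorm _
      _ = (d : ℝ) * hsNorm ρ.1 := by rw [hcard, hsNorm_ptransp]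
      _ ≤ (d : ℝ) * 1 := by
          refine mul_le_mul_of_nonneg_left ?_ (Nat.cast_nonneg d)
          have := psd_hs_le_trace ρ.2.1
          rw [ρ.2.2] at this
          simpa using this
      _ = (d : ℝ) := mul_one _
  have hΘ : (d : ℝ) ≤ diamondNorm (fun X : Matrix (Fin d) (Fin d) ℂ => Xᵀ) := by
    have h1 := le_ciSup hBddΘ
      (⟨rho0 d, rho0_posSemidef, rho0_trace hd⟩ : {ρ : Matrix (Fin d × Fin d)
        (Fin d × Fin d) ℂ // ρ.PosSemidef ∧ ρ.trace = 1})
    have hpt : tensorExt (fun X : Matrix (Fin d) (Fin d) ℂ => Xᵀ) (rho0 d) =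
        ptransp (rho0 d) := rfl
    rw [hpt, traceNorm_ptransp_rho0 hd] at h1
    exact h1
  refine first.trans ?_
  have hstep : ((d : ℝ) / Real.sqrt 2) * diamondNorm (fun X => X - T X) =
      (1 / Real.sqrt 2) * (d : ℝ) * diamondNorm (fun X => X - T X) := by ring
  rw [hstep]
  refine mul_le_mul_of_nonneg_right ?_ hΔnn
  refine mul_le_mul_of_nonneg_left hΘ ?_
  positivity
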